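/- Let Ω0 be the covariance matrix of Y = (Y_1,…,Y_p) and let Γ0 be the covariance matrix of W, where W_i = Y_i − (1/p)Σ_{k=1}^p Y_k. Then Γ0 = G Ω0 G where G = I_p − (1/p) 1 1^T, and consequently ‖Ω0 − Γ0‖_max ≤ 3 p^{-1} ‖Ω0‖_1, where ‖·‖_max is the entrywise supremum norm and ‖·‖_1 is the maximum absolute column sum. -/

import Mathlib

open MeasureTheory

/-- The covariance of two real random variables. -/
noncomputable def cov {α : Type*} [MeasurableSpace α] (μ : Measure α) (f g : α → ℝ) : ℝ :=
  ∫ x, (f x - ∫ y, f y ∂μ) * (g x - ∫ y, g y ∂μ) ∂μ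

section Aux

variable {α : Type*} [MeasurableSpace α] {μ : Measure α}

lemma integrable_mul_of_memL2 {f g : α → ℝ} (hf : MemLp f 2 μ) (hg : MemLp g 2 μ) :
    Integrable (fun x => f x * g x) μ := by
  have h : MemLp (f • g) 1 μ := hg.smul hf
    (hpqr := ⟨by rw [ENNReal.inv_two_add_inv_two, inv_one]⟩)
  rw [memLp_one_iff_integrable] at h
  exact h

lemma key_expand [IsProbabilityMeasure μ] {p : ℕ} (f : Fin p → α → ℝ)
    (hf : ∀ k, MemLp (f k) 2 μ) (c : ℝ) (i j : Fin p) :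
    ∫ x, (f i x - c * ∑ k, f k x) * (f j x - c * ∑ k, f k x) ∂μ
    = (∫ x, f i x * f j x ∂μ) - c * (∑ l, ∫ x, f i x * f l x ∂μ)
      - c * (∑ k, ∫ x, f k x * f j x ∂μ)
      + c ^ 2 * ∑ k, ∑ l, ∫ x, f k x * f l x ∂μ := by
  have hint : ∀ k l, Integrable (fun x => f k x * f l x) μ :=
    fun k l => integrable_mul_of_memL2 (hf k) (hf l)
  have h1 : ∀ k, Integrable (fun x => f k x * ∑ l, f l x) μ := by
    intro k
    have : (fun x => f k x * ∑ l, f l x) = fun x => ∑ l, f k x * f l x := by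
      funext x; rw [Finset.mul_sum]
    rw [this]; exact integrable_finset_sum _ (fun l _ => hint k l)
  have h2 : ∀ k, Integrable (fun x => (∑ l, f l x) * f k x) μ := by
    intro k
    have : (fun x => (∑ l, f l x) * f k x) = fun x => ∑ l, f l x * f k x := by
      funext x; rw [Finset.sum_mul]
    rw [this]; exact integrable_finset_sum _ (fun l _ => hint l k)
  have h3 : Integrable (fun x => (∑ k, f k x) * ∑ l, f l x) μ := by
    have : (fun x => (∑ k, f k x) * ∑ l, f l x) = fun x => ∑ k, ∑ l, f k x * f l x := by
      funext x; rw [Finset.sum_mul]; exact Finset.sum_congr rfl fun k _ => Finset.mul_sum ..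
    rw [this]
    exact integrable_finset_sum _ fun k _ => integrable_finset_sum _ (fun l _ => hint k l)
  have e1 : ∀ k, ∫ x, f k x * ∑ l, f l x ∂μ = ∑ l, ∫ x, f k x * f l x ∂μ := by
    intro k
    simp_rw [Finset.mul_sum]
    exact integral_finset_sum _ (fun l _ => hint k l)
  have e2 : ∀ k, ∫ x, (∑ l, f l x) * f k x ∂μ = ∑ l, ∫ x, f l x * f k x ∂μ := by
    intro k
    simp_rw [Finset.sum_mul]
    exact integral_finset_sum _ (fun l _ => hint _ k)
  have e3 : ∫ x, (∑ k, f k x) * ∑ l, f l x ∂μ = ∑ k, ∑ l, ∫ x, f k x * f l x ∂μ := by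
    simp_rw [Finset.sum_mul, Finset.mul_sum]
    rw [integral_finset_sum _ fun k _ =>
      integrable_finset_sum _ (fun l _ => hint k l)]
    exact Finset.sum_congr rfl fun k _ => integral_finset_sum _ (fun l _ => hint k l)
  calc ∫ x, (f i x - c * ∑ k, f k x) * (f j x - c * ∑ k, f k x) ∂μ
      = ∫ x, (f i x * f j x - c * (f i x * ∑ k, f k x)
          - c * ((∑ k, f k x) * f j x) + c ^ 2 * ((∑ k, f k x) * ∑ l, f l x)) ∂μ := by
        apply integral_congr_ae; filter_upwards with x; ring
    _ = _ := by
        have hs1 : Integrable (fun x => f i x * f j x - c * (f i x * ∑ k, f k x)) μ :=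
          (hint i j).sub ((h1 i).const_mul c)
        have hs2 : Integrable (fun x => f i x * f j x - c * (f i x * ∑ k, f k x)
            - c * ((∑ k, f k x) * f j x)) μ := hs1.sub ((h2 j).const_mul c)
        have hs3 : Integrable (fun x => c ^ 2 * ((∑ k, f k x) * ∑ l, f l x)) μ :=
          h3.const_mul _
        rw [integral_add hs2 hs3, integral_sub hs1 ((h2 j).const_mul c),
          integral_sub (hint i j) ((h1 i).const_mul c),
          integral_const_mul, integral_const_mul, integral_const_mul, e1, e2, e3]

end Aux

/-- Let `Ω0` be the covariance matrix of `Y = (Y_1,…,Y_p)` and `Γ0`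
the covariance matrix of `W`, where `W_i = Y_i − p⁻¹ ∑_k Y_k`. Then
`Γ0 = G Ω0 G` with `G = I_p − p⁻¹ 1 1ᵀ`, and consequently
`‖Ω0 − Γ0‖_max ≤ 3 p⁻¹ ‖Ω0‖_1`. -/
theorem stmt_2 {α : Type*} [MeasurableSpace α] (μ : Measure α) [IsProbabilityMeasure μ]
    (p : ℕ) (hp : 0 < p) (Y W : α → Fin p → ℝ)
    (hY : ∀ i, MemLp (fun x => Y x i) 2 μ)
    (hW : ∀ x i, W x i = Y x i - (p : ℝ)⁻¹ * ∑ k, Y x k)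
    (Ω0 Γ0 G : Matrix (Fin p) (Fin p) ℝ)
    (hΩ : ∀ i j, Ω0 i j = cov μ (fun x => Y x i) (fun x => Y x j))
    (hΓ : ∀ i j, Γ0 i j = cov μ (fun x => W x i) (fun x => W x j))
    (hG : G = 1 - (p : ℝ)⁻¹ • Matrix.of (fun _ _ => (1 : ℝ))) :
    Γ0 = G * Ω0 * G ∧
      ∀ i j, |Ω0 i j - Γ0 i j| ≤ 3 * (p : ℝ)⁻¹ * ⨆ j', ∑ i', |Ω0 i' j'| := by
  haveI : Nonempty (Fin p) := ⟨⟨0, hp⟩⟩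
  have hp' : (p : ℝ) ≠ 0 := Nat.cast_ne_zero.mpr hp.ne'
  set c : ℝ := (p : ℝ)⁻¹ with hc
  set f : Fin p → α → ℝ := fun i x => Y x i - ∫ y, Y y i ∂μ with hfdef
  have hfmem : ∀ i, MemLp (f i) 2 μ := fun i => (hY i).sub (memLp_const _)
  have hYint : ∀ i, Integrable (fun x => Y x i) μ := fun i => (hY i).integrable one_le_two
  have hΩ' : ∀ i j, Ω0 i j = ∫ x, f i x * f j x ∂μ := fun i j => hΩ i j
  have hWint : ∀ i, ∫ x, W x i ∂μ = (∫ x, Y x i ∂μ) - c * ∑ k, ∫ x, Y x k ∂μ := by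
    intro i
    have h : (fun x => W x i) = fun x => Y x i - c * ∑ k, Y x k := funext fun x => hW x i
    rw [h, integral_sub (hYint i) ((integrable_finset_sum _ fun k _ => hYint k).const_mul c),
      integral_const_mul, integral_finset_sum _ fun k _ => hYint k]
  have hWc : ∀ i x, W x i - ∫ y, W y i ∂μ = f i x - c * ∑ k, f k x := by
    intro i x
    rw [hW x i, hWint i]
    simp only [hfdef, Finset.sum_sub_distrib]
    ring
  have hΓ' : ∀ i j, Γ0 i j = (∫ x, f i x * f j x ∂μ) - c * (∑ l, ∫ x, f i x * f l x ∂μ)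
      - c * (∑ k, ∫ x, f k x * f j x ∂μ) + c ^ 2 * ∑ k, ∑ l, ∫ x, f k x * f l x ∂μ := by
    intro i j
    rw [hΓ i j]
    simp only [cov, hWc]
    exact key_expand f hfmem c i j
  have hGG : ∀ i j, (G * Ω0 * G) i j = Ω0 i j - c * (∑ k, Ω0 k j) - c * (∑ l, Ω0 i l)
      + c ^ 2 * ∑ k, ∑ l, Ω0 k l := by
    intro i j
    set J : Matrix (Fin p) (Fin p) ℝ := Matrix.of (fun _ _ => (1 : ℝ)) with hJ
    have hGGm : G * Ω0 * G = Ω0 - c • (J * Ω0) - c • (Ω0 * J) + (c * c) • (J * Ω0 * J) := by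
      rw [hG]
      simp only [Matrix.sub_mul, Matrix.mul_sub, Matrix.smul_mul, Matrix.mul_smul, Matrix.one_mul,
        Matrix.mul_one, smul_smul, Matrix.mul_assoc, smul_sub, smul_add, neg_smul, one_smul,
        smul_neg, neg_neg]
      abel
    rw [hGGm]
    simp only [Matrix.add_apply, Matrix.sub_apply, Matrix.smul_apply, smul_eq_mul,
      Matrix.mul_apply, hJ, Matrix.of_apply, one_mul, mul_one, Finset.mul_sum, Finset.sum_mul]
    ring_nf
    rw [Finset.sum_comm]
  have hmain : Γ0 = G * Ω0 * G := by
    ext i j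
    rw [hΓ' i j, hGG i j]
    simp only [hΩ']
    ring
  refine ⟨hmain, ?_⟩
  have hsym : ∀ i j, Ω0 i j = Ω0 j i := by
    intro i j
    rw [hΩ, hΩ]
    simp only [cov]
    congr 1
    funext x
    ring
  set M := ⨆ j', ∑ i', |Ω0 i' j'| with hM
  have hbdd : ∀ j, (∑ i', |Ω0 i' j|) ≤ M :=
    fun j => le_ciSup (f := fun j' => ∑ i', |Ω0 i' j'|)
      (Set.Finite.bddAbove (Set.finite_range _)) j
  have hM0 : 0 ≤ M :=
    le_trans (Finset.sum_nonneg fun _ _ => abs_nonneg _) (hbdd (Classical.arbitrary _))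
  have hc0 : 0 ≤ c := by positivity
  intro i j
  have hdiff : Ω0 i j - Γ0 i j
      = c * (∑ k, Ω0 k j) + c * (∑ l, Ω0 i l) - c ^ 2 * ∑ k, ∑ l, Ω0 k l := by
    rw [hmain, hGG i j]; ring
  rw [hdiff]
  have t1 : |∑ k, Ω0 k j| ≤ M := (Finset.abs_sum_le_sum_abs _ _).trans (hbdd j)
  have t2 : |∑ l, Ω0 i l| ≤ M := by
    refine (Finset.abs_sum_le_sum_abs _ _).trans ?_
    calc ∑ l, |Ω0 i l| = ∑ l, |Ω0 l i| := Finset.sum_congr rfl fun l _ => by rw [hsym i l]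
      _ ≤ M := hbdd i
  have t3 : |∑ k, ∑ l, Ω0 k l| ≤ (p : ℝ) * M := by
    refine (Finset.abs_sum_le_sum_abs _ _).trans ?_
    calc ∑ k, |∑ l, Ω0 k l| ≤ ∑ k, ∑ l, |Ω0 k l| :=
        Finset.sum_le_sum fun k _ => Finset.abs_sum_le_sum_abs _ _
      _ = ∑ l, ∑ k, |Ω0 k l| := Finset.sum_comm
      _ ≤ ∑ _l : Fin p, M := Finset.sum_le_sum fun l _ => hbdd l
      _ = (p : ℝ) * M := by simp [Finset.sum_const, nsmul_eq_mul]
  have b1 : |c * (∑ k, Ω0 k j)| ≤ c * M := by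
    rw [abs_mul, abs_of_nonneg hc0]; exact mul_le_mul_of_nonneg_left t1 hc0
  have b2 : |c * (∑ l, Ω0 i l)| ≤ c * M := by
    rw [abs_mul, abs_of_nonneg hc0]; exact mul_le_mul_of_nonneg_left t2 hc0
  have b3 : |c ^ 2 * ∑ k, ∑ l, Ω0 k l| ≤ c ^ 2 * ((p : ℝ) * M) := by
    rw [abs_mul, abs_of_nonneg (by positivity : (0:ℝ) ≤ c ^ 2)]
    exact mul_le_mul_of_nonneg_left t3 (by positivity)
  have hcc : c ^ 2 * ((p : ℝ) * M) = c * M := by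
    rw [hc]; field_simp
  calc |c * (∑ k, Ω0 k j) + c * (∑ l, Ω0 i l) - c ^ 2 * ∑ k, ∑ l, Ω0 k l|
      = |(c * (∑ k, Ω0 k j) + c * (∑ l, Ω0 i l)) + -(c ^ 2 * ∑ k, ∑ l, Ω0 k l)| := by
        ring_nf
    _ ≤ |c * (∑ k, Ω0 k j) + c * (∑ l, Ω0 i l)| + |-(c ^ 2 * ∑ k, ∑ l, Ω0 k l)| := abs_add_le _ _
    _ ≤ (|c * (∑ k, Ω0 k j)| + |c * (∑ l, Ω0 i l)|) + |c ^ 2 * ∑ k, ∑ l, Ω0 k l| := by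
        rw [abs_neg]; exact add_le_add_left (abs_add_le _ _) _
    _ ≤ (c * M + c * M) + c ^ 2 * ((p : ℝ) * M) := by
        exact add_le_add (add_le_add b1 b2) b3
    _ = 3 * c * M := by rw [hcc]; ring
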